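/- Let X be a finite-dimensional real normed space, m ≥ 1, and A ⊆ X a Borel set with 𝓗ᵐ_{‖·‖}(A) < ∞. Then π ↦ 𝓗ᵐ_{‖·‖}(π(A)) is a Borel measurable function on the space Hom_m(X,X) of linear endomorphisms of rank at most m. -/

import Mathlib

open Filter MeasureTheory
open scoped ENNReal NNReal Topology

open EMetric in
/-- The infimum of `∑ diam (t k) ^ d` over countable covers of `s` by sets of
diameter at most `r`. -/
noncomputable def covInf {Y : Type*} [EMetricSpace Y] (d : ℝ) (r : ℝ≥0∞) (s : Set Y) : ℝ≥0∞ :=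
  ⨅ (t : ℕ → Set Y) (_ : s ⊆ ⋃ k, t k) (_ : ∀ k, diam (t k) ≤ r), ∑' k, diam (t k) ^ d

lemma covInf_anti {Y : Type*} [EMetricSpace Y] (d : ℝ) {r r' : ℝ≥0∞} (h : r ≤ r') (s : Set Y) :
    covInf d r' s ≤ covInf d r s := by
  refine le_iInf fun t => le_iInf fun h1 => le_iInf fun h2 => ?_
  exact iInf_le_of_le t (iInf_le_of_le h1 (iInf_le_of_le (fun k => (h2 k).trans h) le_rfl))

lemma hausdorffMeasure_eq_iSup_covInf {Y : Type*} [EMetricSpace Y] [MeasurableSpace Y]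
    [BorelSpace Y] {d : ℝ} (hd : 0 < d) (s : Set Y) :
    μH[d] s = ⨆ n : ℕ, covInf d (((n + 1 : ℕ) : ℝ≥0∞))⁻¹ s := by
  rw [MeasureTheory.Measure.hausdorffMeasure_apply]
  have hsup : ∀ t : Set Y, (⨆ _ : t.Nonempty, EMetric.diam t ^ d) = EMetric.diam t ^ d := by
    intro t
    rcases t.eq_empty_or_nonempty with rfl | h
    · simp [ENNReal.zero_rpow_of_pos hd, EMetric.diam]
    · exact iSup_pos h
  have hre : ∀ r : ℝ≥0∞,
      (⨅ (t : ℕ → Set Y) (_ : s ⊆ ⋃ k, t k) (_ : ∀ k, EMetric.diam (t k) ≤ r),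
        ∑' k, ⨆ _ : (t k).Nonempty, EMetric.diam (t k) ^ d) = covInf d r s := by
    intro r
    unfold covInf
    exact iInf_congr fun t => iInf_congr fun _ => iInf_congr fun _ =>
      tsum_congr fun k => hsup _
  refine (iSup_congr fun r => iSup_congr fun _ => hre r).trans ?_
  apply le_antisymm
  · refine iSup_le fun r => iSup_le fun hr => ?_
    obtain ⟨n, hn⟩ := ENNReal.exists_inv_nat_lt hr.ne'
    refine le_trans (covInf_anti d ?_ s) (le_iSup (fun k : ℕ => covInf d (((k + 1 : ℕ) : ℝ≥0∞))⁻¹ s) n)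
    have h1 : (((n + 1 : ℕ) : ℝ≥0∞))⁻¹ ≤ ((n : ℕ) : ℝ≥0∞)⁻¹ :=
      ENNReal.inv_le_inv.2 (by exact_mod_cast Nat.le_succ n)
    exact h1.trans hn.le
  · refine iSup_le fun n => ?_
    have hpos : (0 : ℝ≥0∞) < (((n + 1 : ℕ) : ℝ≥0∞))⁻¹ :=
      ENNReal.inv_pos.2 (ENNReal.natCast_ne_top (n + 1))
    exact le_iSup₂ (f := fun r (_ : 0 < r) =>
      ⨅ (t : ℕ → Set Y) (_ : s ⊆ ⋃ k, t k) (_ : ∀ k, EMetric.diam (t k) ≤ r),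
        ∑' k, EMetric.diam (t k) ^ d) (((n + 1 : ℕ) : ℝ≥0∞))⁻¹ hpos

/-- The key semicontinuity estimate: near a fixed `π`, the covering sum of `π' '' K` at
scale `(n+1)⁻¹` is controlled by that of `π '' K` at scale `(2n+2)⁻¹`. -/
lemma covInf_image_eventually_le {X : Type*} [NormedAddCommGroup X] [NormedSpace ℝ X]
    {d : ℝ} (hd : 0 < d) {K : Set X} (hK : IsCompact K) (π : X →L[ℝ] X) (n : ℕ)
    {ε : ℝ≥0∞} (hε : ε ≠ 0) :
    ∀ᶠ π' : X →L[ℝ] X in 𝓝 π, covInf d (((n + 1 : ℕ) : ℝ≥0∞))⁻¹ (π' '' K) ≤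
      covInf d (((2 * n + 2 : ℕ) : ℝ≥0∞))⁻¹ (π '' K) + ε := by
  set s : ℝ≥0∞ := (((2 * n + 2 : ℕ) : ℝ≥0∞))⁻¹ with hs
  set c : ℝ≥0∞ := covInf d s (π '' K) with hc
  rcases eq_or_ne c ⊤ with hctop | hcne
  · filter_upwards with π'
    rw [hctop, top_add]
    exact le_top
  rcases eq_or_ne ε ⊤ with rfl | hεne
  · filter_upwards with π'
    rw [add_top]
    exact le_top
  have hs_ne_top : s ≠ ⊤ := by
    simp [hs]
  have hs_pos : (0 : ℝ≥0∞) < s :=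
    ENNReal.inv_pos.2 (ENNReal.natCast_ne_top _)
  -- choose a good cover of `π '' K` at scale `s`
  have hεq : (0 : ℝ≥0∞) < ε / 2 := ENNReal.half_pos hε
  have hlt : c < c + ε / 2 := ENNReal.lt_add_right hcne hεq.ne'
  obtain ⟨t, htcov, htdiam, htsum⟩ :
      ∃ t : ℕ → Set X, (π '' K ⊆ ⋃ k, t k) ∧ (∀ k, EMetric.diam (t k) ≤ s) ∧
        ∑' k, EMetric.diam (t k) ^ d < c + ε / 2 := by
    have h := hlt
    conv_lhs at h => rw [hc]
    unfold covInf at h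
    simp only [iInf_lt_iff] at h
    obtain ⟨t, h1, h2, h3⟩ := h
    exact ⟨t, h1, h2, h3⟩
  -- choose thickening radii
  have hchoice : ∀ k : ℕ, ∃ η : ℝ≥0, 0 < η ∧ 2 * (η : ℝ≥0∞) ≤ s ∧
      (EMetric.diam (t k) + 2 * (η : ℝ≥0∞)) ^ d ≤
        EMetric.diam (t k) ^ d + ε / 4 * (2 : ℝ≥0∞)⁻¹ ^ k := by
    intro k
    set a : ℝ≥0∞ := EMetric.diam (t k) with ha
    have ha_ne_top : a ≠ ⊤ := ((htdiam k).trans_lt hs_ne_top.lt_top).ne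
    have hδpos : (0 : ℝ≥0∞) < ε / 4 * (2 : ℝ≥0∞)⁻¹ ^ k := by
      apply ENNReal.mul_pos
      · exact (ENNReal.div_pos hε (by norm_num : (4 : ℝ≥0∞) ≠ ∞)).ne'
      · exact pow_ne_zero k (ENNReal.inv_ne_zero.2 (by norm_num : (2 : ℝ≥0∞) ≠ ∞))
    have htends : Tendsto (fun η : ℝ≥0 => (a + 2 * (η : ℝ≥0∞)) ^ d) (𝓝 0)
        (𝓝 (a ^ d)) := by
      have h1 : Tendsto (fun η : ℝ≥0 => a + 2 * (η : ℝ≥0∞)) (𝓝 0) (𝓝 a) := by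
        have : Tendsto (fun η : ℝ≥0 => (η : ℝ≥0∞)) (𝓝 0) (𝓝 (0 : ℝ≥0∞)) := by
          exact (ENNReal.continuous_coe.tendsto 0).congr fun _ => rfl
        have h2 := ENNReal.Tendsto.const_mul (a := 2) this (Or.inr (by norm_num))
        have h3 := h2.const_add a
        simpa using h3
      exact h1.ennrpow_const d
    have hfin : a ^ d < a ^ d + ε / 4 * (2 : ℝ≥0∞)⁻¹ ^ k :=
      ENNReal.lt_add_right (ENNReal.rpow_lt_top_of_nonneg hd.le ha_ne_top).ne hδpos.ne'
    have hev1 : ∀ᶠ η : ℝ≥0 in 𝓝 0, (a + 2 * (η : ℝ≥0∞)) ^ d <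
        a ^ d + ε / 4 * (2 : ℝ≥0∞)⁻¹ ^ k := htends.eventually_lt_const hfin
    have hev2 : ∀ᶠ η : ℝ≥0 in 𝓝 0, 2 * (η : ℝ≥0∞) ≤ s := by
      have h1 : Tendsto (fun η : ℝ≥0 => 2 * (η : ℝ≥0∞)) (𝓝 0) (𝓝 0) := by
        have : Tendsto (fun η : ℝ≥0 => (η : ℝ≥0∞)) (𝓝 0) (𝓝 (0 : ℝ≥0∞)) :=
          (ENNReal.continuous_coe.tendsto 0).congr fun _ => rfl
        simpa using ENNReal.Tendsto.const_mul (a := 2) this (Or.inr (by norm_num))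
      exact (h1.eventually_lt_const hs_pos).mono fun η h => h.le
    have hev3 := (hev1.and hev2).filter_mono
      (nhdsWithin_le_nhds (s := Set.Ioi (0 : ℝ≥0)))
    obtain ⟨η, hη, hηpos⟩ := (hev3.and eventually_mem_nhdsWithin).exists
    exact ⟨η, hηpos, hη.2, hη.1.le⟩
  choose η hη0 hηs hηpow using hchoice
  -- thickened open cover
  set T : ℕ → Set X := fun k => Metric.thickening (η k) (t k) with hT
  have hTopen : ∀ k, IsOpen (T k) := fun k => Metric.isOpen_thickening
  have hTcov : π '' K ⊆ ⋃ k, T k :=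
    htcov.trans (Set.iUnion_mono fun k => Metric.self_subset_thickening
      (by exact_mod_cast hη0 k) _)
  have hKim : IsCompact (π '' K) := hK.image π.continuous
  obtain ⟨F, hF⟩ := hKim.elim_finite_subcover T hTopen hTcov
  obtain ⟨ρ, hρ, hρsub⟩ := hKim.exists_thickening_subset_open
    (isOpen_biUnion fun k _ => hTopen k) hF
  obtain ⟨R, hR, hKR⟩ := hK.isBounded.subset_closedBall_lt 0 0
  -- the neighborhood
  have hball : Metric.ball π (ρ / R) ∈ 𝓝 π := Metric.ball_mem_nhds π (by positivity)
  filter_upwards [hball] with π' hπ'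
  -- `π' '' K` is covered by the finitely many thickened sets
  have himsub : π' '' K ⊆ ⋃ k ∈ F, T k := by
    refine Set.Subset.trans ?_ hρsub
    rintro _ ⟨x, hx, rfl⟩
    have hxR : ‖x‖ ≤ R := by
      have := hKR hx
      simpa [Metric.mem_closedBall, dist_eq_norm] using this
    have hdist : dist (π' x) (π x) < ρ := by
      have h1 : dist (π' x) (π x) = ‖(π' - π) x‖ := by
        simp [dist_eq_norm]
      have h2 : ‖(π' - π) x‖ ≤ ‖π' - π‖ * ‖x‖ := (π' - π).le_opNorm x
      have h3 : ‖π' - π‖ * ‖x‖ ≤ ‖π' - π‖ * R :=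
        mul_le_mul_of_nonneg_left hxR (norm_nonneg _)
      have h4 : ‖π' - π‖ < ρ / R := by
        have := hπ'
        simpa [Metric.mem_ball, dist_eq_norm] using this
      have h5 : ‖π' - π‖ * R < ρ / R * R := by
        exact mul_lt_mul_of_pos_right h4 hR
      rw [div_mul_cancel₀ _ hR.ne'] at h5
      calc dist (π' x) (π x) = ‖(π' - π) x‖ := h1
        _ ≤ ‖π' - π‖ * ‖x‖ := h2
        _ ≤ ‖π' - π‖ * R := h3
        _ < ρ := h5
    exact Metric.mem_thickening_iff.2 ⟨π x, Set.mem_image_of_mem π hx, hdist⟩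
  -- the new cover
  set t' : ℕ → Set X := fun k => if k ∈ F then T k else ∅ with ht'
  have ht'cov : π' '' K ⊆ ⋃ k, t' k := by
    refine himsub.trans ?_
    intro y hy
    simp only [Set.mem_iUnion, exists_prop] at hy
    obtain ⟨k, hkF, hky⟩ := hy
    exact Set.mem_iUnion.2 ⟨k, by simp [ht', hkF, hky]⟩
  have hss : s + s = (((n + 1 : ℕ) : ℝ≥0∞))⁻¹ := by
    rw [hs]
    have h1 : ((2 * n + 2 : ℕ) : ℝ≥0∞) = 2 * ((n + 1 : ℕ) : ℝ≥0∞) := by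
      push_cast; ring
    rw [h1, ENNReal.mul_inv (Or.inl (by norm_num)) (Or.inl (by norm_num)),
      ← two_mul, ← mul_assoc, ENNReal.mul_inv_cancel (by norm_num) (by norm_num), one_mul]
  have ht'diam : ∀ k, EMetric.diam (t' k) ≤ (((n + 1 : ℕ) : ℝ≥0∞))⁻¹ := by
    intro k
    by_cases hkF : k ∈ F
    · have h1 : EMetric.diam (T k) ≤ EMetric.diam (t k) + 2 * (η k : ℝ≥0∞) :=
        Metric.ediam_thickening_le (η k)
      have h2 : EMetric.diam (t k) + 2 * (η k : ℝ≥0∞) ≤ s + s :=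
        add_le_add (htdiam k) (hηs k)
      simp only [ht', if_pos hkF]
      exact h1.trans (h2.trans_eq hss)
    · simp [ht', hkF, EMetric.diam]
  have ht'sum : ∑' k, EMetric.diam (t' k) ^ d ≤
      (∑' k, EMetric.diam (t k) ^ d) + ε / 2 := by
    have hterm : ∀ k, EMetric.diam (t' k) ^ d ≤
        EMetric.diam (t k) ^ d + ε / 4 * (2 : ℝ≥0∞)⁻¹ ^ k := by
      intro k
      by_cases hkF : k ∈ F
      · have h1 : EMetric.diam (t' k) ≤ EMetric.diam (t k) + 2 * (η k : ℝ≥0∞) := by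
          simp only [ht', if_pos hkF]
          exact Metric.ediam_thickening_le (η k)
        exact (ENNReal.rpow_le_rpow h1 hd.le).trans (hηpow k)
      · simp only [ht', if_neg hkF, EMetric.diam_empty, ENNReal.zero_rpow_of_pos hd]
        simp [EMetric.diam, ENNReal.zero_rpow_of_pos hd]
    calc ∑' k, EMetric.diam (t' k) ^ d
        ≤ ∑' k, (EMetric.diam (t k) ^ d + ε / 4 * (2 : ℝ≥0∞)⁻¹ ^ k) :=
          ENNReal.tsum_le_tsum hterm
      _ = (∑' k, EMetric.diam (t k) ^ d) + ∑' k, ε / 4 * (2 : ℝ≥0∞)⁻¹ ^ k :=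
          ENNReal.tsum_add
      _ ≤ (∑' k, EMetric.diam (t k) ^ d) + ε / 2 := by
          gcongr
          rw [ENNReal.tsum_mul_left, ENNReal.tsum_geometric, ENNReal.one_sub_inv_two,
            inv_inv]
          rw [ENNReal.div_eq_inv_mul, ENNReal.div_eq_inv_mul]
          rw [mul_comm (4 : ℝ≥0∞)⁻¹ ε, mul_assoc]
          have h42 : (4 : ℝ≥0∞)⁻¹ * 2 = 2⁻¹ := by
            rw [show (4 : ℝ≥0∞) = 2 * 2 by norm_num,
              ENNReal.mul_inv (Or.inl (by norm_num)) (Or.inl (by norm_num)), mul_assoc,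
              ENNReal.inv_mul_cancel (by norm_num) (by norm_num), mul_one]
          rw [h42, mul_comm]
  -- conclude
  have hfinal : covInf d (((n + 1 : ℕ) : ℝ≥0∞))⁻¹ (π' '' K) ≤
      ∑' k, EMetric.diam (t' k) ^ d := by
    unfold covInf
    exact iInf_le_of_le t' (iInf_le_of_le ht'cov (iInf_le_of_le ht'diam le_rfl))
  calc covInf d (((n + 1 : ℕ) : ℝ≥0∞))⁻¹ (π' '' K)
      ≤ ∑' k, EMetric.diam (t' k) ^ d := hfinal
    _ ≤ (∑' k, EMetric.diam (t k) ^ d) + ε / 2 := ht'sum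
    _ ≤ (c + ε / 2) + ε / 2 := add_le_add_left htsum.le _
    _ = c + ε := by rw [add_assoc, ENNReal.add_halves]

/-- Measurability of `π ↦ μH[d] (π '' K)` for `K` compact. -/
lemma measurable_hausdorffMeasure_image_compact {X : Type*} [NormedAddCommGroup X]
    [NormedSpace ℝ X] [FiniteDimensional ℝ X] [MeasurableSpace X] [BorelSpace X]
    [MeasurableSpace (X →L[ℝ] X)] [BorelSpace (X →L[ℝ] X)]
    {d : ℝ} (hd : 0 < d) {K : Set X} (hK : IsCompact K) :
    Measurable fun π : X →L[ℝ] X => μH[d] (π '' K) := by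
  set u : ℕ → (X →L[ℝ] X) → ℝ≥0∞ :=
    fun n π => covInf d (((n + 1 : ℕ) : ℝ≥0∞))⁻¹ (π '' K) with hu
  have huH : ∀ π : X →L[ℝ] X, μH[d] (π '' K) = ⨆ n, u n π := fun π =>
    hausdorffMeasure_eq_iSup_covInf hd (π '' K)
  set v : ℕ → (X →L[ℝ] X) → ℝ≥0∞ := fun n π => limsup (u n) (𝓝 π) with hv
  have h1 : ∀ n π, u n π ≤ v n π := by
    intro n π
    rw [hv]
    simp only [limsup_eq]
    exact le_sInf fun a ha => ha.self_of_nhds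
  have h2 : ∀ n π, v n π ≤ ⨆ k, u k π := by
    intro n π
    have hle : v n π ≤ u (2 * n + 1) π := by
      apply ENNReal.le_of_forall_pos_le_add
      intro ε hε _
      have hkey := covInf_image_eventually_le hd hK π n
        (ε := (ε : ℝ≥0∞)) (by exact_mod_cast hε.ne')
      have hkey' : ∀ᶠ π' in 𝓝 π, u n π' ≤ u (2 * n + 1) π + (ε : ℝ≥0∞) := by
        filter_upwards [hkey] with π' h
        have : (2 * n + 2 : ℕ) = (2 * n + 1) + 1 := by ring
        rw [hu]
        simpa [this] using h
      exact limsup_le_of_le (by isBoundedDefault) hkey'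
    exact hle.trans (le_iSup (fun k => u k π) (2 * n + 1))
  have h3 : ∀ n, Measurable (v n) := by
    intro n
    apply measurable_of_Iio
    intro c
    have hopen : IsOpen {π : X →L[ℝ] X | v n π < c} := by
      rw [isOpen_iff_mem_nhds]
      intro π₀ hπ₀
      have hπ₀' : v n π₀ < c := hπ₀
      obtain ⟨c', hc1, hc2⟩ := exists_between hπ₀'
      have hev : ∀ᶠ x in 𝓝 π₀, u n x < c' :=
        eventually_lt_of_limsup_lt hc1 (by isBoundedDefault)
      obtain ⟨U, hU, hUopen, hπ₀U⟩ := eventually_nhds_iff.1 hev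
      refine mem_of_superset (hUopen.mem_nhds hπ₀U) ?_
      intro π' hπ'U
      have : v n π' ≤ c' := by
        apply limsup_le_of_le (by isBoundedDefault)
        filter_upwards [hUopen.mem_nhds hπ'U] with x hx
        exact (hU x hx).le
      exact this.trans_lt hc2
    exact hopen.measurableSet
  have hveq : ∀ π, (⨆ n, v n π) = μH[d] (π '' K) := by
    intro π
    apply le_antisymm
    · rw [huH π]
      exact iSup_le fun n => h2 n π
    · rw [huH π]
      exact iSup_le fun n => (h1 n π).trans (le_iSup (fun k => v k π) n)
  have : Measurable fun π : X →L[ℝ] X => ⨆ n, v n π := Measurable.iSup h3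
  convert this using 1
  funext π
  exact (hveq π).symm

/-- For a Borel set `A` with finite `𝓗ᵐ` measure, the function
`π ↦ 𝓗ᵐ_{‖·‖}(π(A))` is Borel measurable on the space of linear endomorphisms of
rank at most `m` (with the operator norm topology). -/
theorem stmt12 {X : Type*} [NormedAddCommGroup X] [NormedSpace ℝ X]
    [FiniteDimensional ℝ X] [MeasurableSpace X] [BorelSpace X]
    [MeasurableSpace (X →L[ℝ] X)] [BorelSpace (X →L[ℝ] X)]
    (m : ℕ) (hm : 1 ≤ m) (A : Set X) (hA : MeasurableSet A)
    (hAfin : μH[(m : ℝ)] A < ⊤) :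
    Measurable
      (fun π : {π : X →L[ℝ] X // Module.finrank ℝ (LinearMap.range π.toLinearMap) ≤ m} =>
        μH[(m : ℝ)] (⇑π.1 '' A)) := by
  have hd : (0 : ℝ) < (m : ℝ) := by exact_mod_cast hm.trans_lt' zero_lt_one
  set d : ℝ := (m : ℝ) with hdd
  -- inner approximation by compact sets
  set ν : Measure X := μH[d].restrict A with hν
  haveI : IsFiniteMeasure ν := ⟨by simpa [hν, Measure.restrict_apply_univ] using hAfin⟩
  have hAν : ν A = μH[d] A := by
    rw [hν, Measure.restrict_apply hA, Set.inter_self]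
  have hKn : ∀ n : ℕ, ∃ K : Set X, K ⊆ A ∧ IsCompact K ∧
      μH[d] (A \ K) ≤ (((n + 1 : ℕ) : ℝ≥0∞))⁻¹ := by
    intro n
    set εn : ℝ≥0∞ := (((n + 1 : ℕ) : ℝ≥0∞))⁻¹ with hεn
    have hεpos : (0 : ℝ≥0∞) < εn := ENNReal.inv_pos.2 (ENNReal.natCast_ne_top _)
    have hε2 : εn / 2 ≠ 0 := (ENNReal.half_pos hεpos.ne').ne'
    obtain ⟨F, hFA, hFc, hFlt⟩ := hA.exists_isClosed_diff_lt
      (μ := ν) (by rw [hAν]; exact hAfin.ne) hε2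
    have hFA' : μH[d] (A \ F) < εn / 2 := by
      rwa [hν, Measure.restrict_apply (hA.diff hFc.measurableSet),
        Set.inter_eq_self_of_subset_left Set.diff_subset] at hFlt
    -- cut F with a large closed ball
    have hFfin : μH[d] F ≠ ⊤ :=
      ((measure_mono hFA).trans_lt hAfin).ne
    have htend : Tendsto (fun j : ℕ => μH[d] (F \ Metric.closedBall 0 j)) atTop
        (𝓝 (μH[d] (⋂ j : ℕ, F \ Metric.closedBall 0 j))) := by
      apply tendsto_measure_iInter_atTop
      · exact fun j => (hFc.measurableSet.diff measurableSet_closedBall).nullMeasurableSet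
      · intro i j hij
        exact Set.diff_subset_diff_right (Metric.closedBall_subset_closedBall
          (by exact_mod_cast hij))
      · exact ⟨0, ((measure_mono Set.diff_subset).trans_lt hFfin.lt_top).ne⟩
    have hiInter : (⋂ j : ℕ, F \ Metric.closedBall 0 j) = ∅ := by
      ext x
      simp only [Set.mem_iInter, Set.mem_diff, Set.mem_empty_iff_false, iff_false, not_forall]
      obtain ⟨j, hj⟩ := exists_nat_ge ‖x‖
      exact ⟨j, fun h => h.2 (by simpa [Metric.mem_closedBall, dist_eq_norm] using hj)⟩
    rw [hiInter, measure_empty] at htend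
    have hev : ∀ᶠ j : ℕ in atTop, μH[d] (F \ Metric.closedBall 0 j) < εn / 2 :=
      htend.eventually_lt_const (ENNReal.half_pos hεpos.ne')
    obtain ⟨j, hj⟩ := hev.exists
    refine ⟨F ∩ Metric.closedBall 0 j, Set.inter_subset_left.trans hFA,
      (isCompact_closedBall 0 j).inter_left hFc, ?_⟩
    have hsub : A \ (F ∩ Metric.closedBall 0 j) ⊆
        (A \ F) ∪ (F \ Metric.closedBall 0 j) := by
      intro x hx
      by_cases hxF : x ∈ F
      · exact Or.inr ⟨hxF, fun hb => hx.2 ⟨hxF, hb⟩⟩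
      · exact Or.inl ⟨hx.1, hxF⟩
    calc μH[d] (A \ (F ∩ Metric.closedBall 0 j))
        ≤ μH[d] ((A \ F) ∪ (F \ Metric.closedBall 0 j)) := measure_mono hsub
      _ ≤ μH[d] (A \ F) + μH[d] (F \ Metric.closedBall 0 j) := measure_union_le _ _
      _ ≤ εn / 2 + εn / 2 := add_le_add hFA'.le hj.le
      _ = εn := ENNReal.add_halves εn
  choose K hKA hKc hKsmall using hKn
  -- pointwise convergence
  have hconv : ∀ π : X →L[ℝ] X,
      Tendsto (fun n => μH[d] (π '' K n)) atTop (𝓝 (μH[d] (π '' A))) := by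
    intro π
    set C : ℝ≥0∞ := (‖π‖₊ : ℝ≥0∞) ^ d with hC
    have hCne : C ≠ ⊤ :=
      (ENNReal.rpow_lt_top_of_nonneg hd.le ENNReal.coe_ne_top).ne
    have him : ∀ S : Set X, μH[d] (π '' S) ≤ C * μH[d] S := fun S =>
      π.lipschitz.hausdorffMeasure_image_le hd.le S
    have hbne : μH[d] (π '' A) ≠ ⊤ :=
      ((him A).trans_lt (ENNReal.mul_lt_top hCne.lt_top hAfin)).ne
    have hub : ∀ n, μH[d] (π '' K n) ≤ μH[d] (π '' A) := fun n =>
      measure_mono (Set.image_mono (hKA n))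
    have hlb : ∀ n, μH[d] (π '' A) ≤ μH[d] (π '' K n) + C * (((n + 1 : ℕ) : ℝ≥0∞))⁻¹ := by
      intro n
      have hsplit : π '' A ⊆ π '' K n ∪ π '' (A \ K n) := by
        rw [← Set.image_union]
        exact Set.image_mono (fun x hx => (em (x ∈ K n)).elim Or.inl fun h => Or.inr ⟨hx, h⟩)
      calc μH[d] (π '' A) ≤ μH[d] (π '' K n ∪ π '' (A \ K n)) := measure_mono hsplit
        _ ≤ μH[d] (π '' K n) + μH[d] (π '' (A \ K n)) := measure_union_le _ _
        _ ≤ μH[d] (π '' K n) + C * (((n + 1 : ℕ) : ℝ≥0∞))⁻¹ := by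
            gcongr
            exact (him (A \ K n)).trans (mul_le_mul_right (hKsmall n) C)
    rw [ENNReal.tendsto_nhds hbne]
    intro ε hε
    have htend0 : Tendsto (fun n : ℕ => C * (((n + 1 : ℕ) : ℝ≥0∞))⁻¹) atTop (𝓝 0) := by
      have h1 : Tendsto (fun n : ℕ => (((n + 1 : ℕ) : ℝ≥0∞))⁻¹) atTop (𝓝 0) := by
        exact ENNReal.tendsto_inv_nat_nhds_zero.comp (tendsto_add_atTop_nat 1)
      simpa using ENNReal.Tendsto.const_mul h1 (Or.inr hCne)
    filter_upwards [htend0.eventually_lt_const hε] with n hn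
    constructor
    · rw [tsub_le_iff_right]
      exact (hlb n).trans (add_le_add_right hn.le _)
    · exact (hub n).trans le_self_add
  have hmeas : Measurable fun π : X →L[ℝ] X => μH[d] (π '' A) := by
    exact measurable_of_tendsto_metrizable
      (f := fun n (π : X →L[ℝ] X) => μH[d] (π '' K n))
      (fun n => measurable_hausdorffMeasure_image_compact hd (hKc n))
      (tendsto_pi_nhds.2 hconv)
  exact hmeas.comp measurable_subtype_coe
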